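/- Let (Y, B, ν) be a probability space, φ: Y → [0,1] a measurable inverse-measure-preserving function (the pushforward of ν under φ is Lebesgue measure μ on the Borel σ-algebra Σ of [0,1]), and ⟨ν_x : x ∈ [0,1]⟩ a Borel disintegration of ν: each ν_x is a probability measure on B, for each bounded B-measurable g: Y → ℝ the function x ↦ ∫ g dν_x is Borel measurable, and for every Borel set E ⊆ [0,1], ∫_E (∫ g dν_x) dμ(x) = ∫_{φ⁻¹(E)} g dν. If ρ is a linear lifting for L∞(Y,B,ν), then the map ρ̄ defined by ρ̄(f)(x) = ∫ ρ(f ∘ φ) dν_x, for f ∈ L∞([0,1],Σ,μ) and x ∈ [0,1], is a well-defined linear lifting for L∞([0,1],Σ,μ). -/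

import Mathlib

open MeasureTheory

/-- The unit interval `[0,1]` with its Borel σ-algebra and Lebesgue measure (`volume`). -/
abbrev I01 := Set.Icc (0:ℝ) 1

/-- `f` belongs to L∞(Y,B,ν): it is measurable and bounded. -/
def MemLinf {Y : Type*} [MeasurableSpace Y] (f : Y → ℝ) : Prop :=
  Measurable f ∧ ∃ M : ℝ, ∀ y, |f y| ≤ M

/-- `ρ` is a linear lifting for L∞(Y,B,ν). -/
structure IsLinearLifting {Y : Type*} [MeasurableSpace Y] (ν : Measure Y)
    (ρ : (Y → ℝ) → (Y → ℝ)) : Prop where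
  mem : ∀ f, MemLinf f → MemLinf (ρ f)
  congr_ae : ∀ f g, MemLinf f → MemLinf g → f =ᵐ[ν] g → ρ f = ρ g
  ae_eq : ∀ f, MemLinf f → ρ f =ᵐ[ν] f
  linear : ∀ f g, MemLinf f → MemLinf g → ∀ x y : ℝ,
    ρ (fun t => x * f t + y * g t) = fun t => x * ρ f t + y * ρ g t
  map_one : ρ (fun _ => (1:ℝ)) = fun _ => (1:ℝ)
  nonneg : ∀ f, MemLinf f → (∀ᵐ y ∂ν, 0 ≤ f y) → ∀ y, 0 ≤ ρ f y

/-- Given a measurable inverse-measure-preserving `φ : Y → [0,1]`, a Borel disintegration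
`⟨ν_x : x ∈ [0,1]⟩` of `ν`, and a linear lifting `ρ` for L∞(Y,B,ν), the map
`ρ̄(f)(x) = ∫ ρ(f ∘ φ) dν_x` is a (well-defined) linear lifting for L∞([0,1],Σ,μ). -/
theorem pushforward_linearLifting {Y : Type*} [MeasurableSpace Y] (ν : Measure Y)
    [IsProbabilityMeasure ν]
    (φ : Y → I01) (hφmeas : Measurable φ) (hφ : Measure.map φ ν = (volume : Measure I01))
    (νx : I01 → Measure Y) (hprob : ∀ x, IsProbabilityMeasure (νx x))
    (hmeas : ∀ g : Y → ℝ, MemLinf g → Measurable (fun x : I01 => ∫ y, g y ∂(νx x)))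
    (hdis : ∀ g : Y → ℝ, MemLinf g → ∀ E : Set I01, MeasurableSet E →
      ∫ x in E, (∫ y, g y ∂(νx x)) ∂(volume : Measure I01) = ∫ y in φ ⁻¹' E, g y ∂ν)
    (ρ : (Y → ℝ) → (Y → ℝ)) (hρ : IsLinearLifting ν ρ) :
    IsLinearLifting (volume : Measure I01)
      (fun (f : I01 → ℝ) (x : I01) => ∫ y, ρ (f ∘ φ) y ∂(νx x)) := by
  have key : ∀ f : I01 → ℝ, MemLinf f → MemLinf (f ∘ φ) := fun f hf =>
    ⟨hf.1.comp hφmeas, hf.2.imp fun M hM y => hM (φ y)⟩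
  have int : ∀ (g : Y → ℝ), MemLinf g → ∀ x : I01, Integrable g (νx x) := by
    intro g hg x
    haveI := hprob x
    obtain ⟨hm, M, hM⟩ := hg
    exact (integrable_const M).mono' hm.aestronglyMeasurable
      (Filter.Eventually.of_forall fun y => by simpa using hM y)
  constructor
  · -- mem
    intro f hf
    obtain ⟨hρm, M, hM⟩ := hρ.mem _ (key f hf)
    refine ⟨hmeas _ ⟨hρm, M, hM⟩, M, fun x => ?_⟩
    haveI := hprob x
    calc |∫ y, ρ (f ∘ φ) y ∂(νx x)| = ‖∫ y, ρ (f ∘ φ) y ∂(νx x)‖ := (Real.norm_eq_abs _).symm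
      _ ≤ M * ((νx x) Set.univ).toReal :=
          norm_integral_le_of_norm_le_const (Filter.Eventually.of_forall fun y => by
            simpa [Real.norm_eq_abs] using hM y)
      _ = M := by simp
  · -- congr_ae
    intro f g hf hg hfg
    have hcomp : f ∘ φ =ᵐ[ν] g ∘ φ :=
      ae_eq_comp hφmeas.aemeasurable (by rwa [hφ])
    have := hρ.congr_ae _ _ (key f hf) (key g hg) hcomp
    simp only [this]
  · -- ae_eq
    intro f hf
    have hρmem := hρ.mem _ (key f hf)
    have hFmeas : Measurable (fun x : I01 => ∫ y, ρ (f ∘ φ) y ∂(νx x)) := hmeas _ hρmem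
    have hFbd : MemLinf (fun x : I01 => ∫ y, ρ (f ∘ φ) y ∂(νx x)) := by
      obtain ⟨hρm, M, hM⟩ := hρmem
      refine ⟨hFmeas, M, fun x => ?_⟩
      haveI := hprob x
      calc |∫ y, ρ (f ∘ φ) y ∂(νx x)| = ‖∫ y, ρ (f ∘ φ) y ∂(νx x)‖ := (Real.norm_eq_abs _).symm
        _ ≤ M * ((νx x) Set.univ).toReal :=
            norm_integral_le_of_norm_le_const (Filter.Eventually.of_forall fun y => by
              simpa [Real.norm_eq_abs] using hM y)
        _ = M := by simp
    have hvol : IsFiniteMeasure (volume : Measure I01) := by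
      constructor
      rw [← hφ]
      exact (Measure.map_apply hφmeas MeasurableSet.univ).trans_lt (by simp)
    haveI := hvol
    have intI : ∀ (g : I01 → ℝ), MemLinf g → Integrable g (volume : Measure I01) := by
      intro g hg
      obtain ⟨hm, M, hM⟩ := hg
      exact (integrable_const M).mono' hm.aestronglyMeasurable
        (Filter.Eventually.of_forall fun y => by simpa using hM y)
    refine ae_eq_of_forall_setIntegral_eq_of_sigmaFinite
      (fun s hs _ => (intI _ hFbd).integrableOn)
      (fun s hs _ => (intI _ hf).integrableOn) ?_
    intro s hs _
    rw [hdis _ hρmem s hs]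
    have h1 : ∫ y in φ ⁻¹' s, ρ (f ∘ φ) y ∂ν = ∫ y in φ ⁻¹' s, (f ∘ φ) y ∂ν :=
      setIntegral_congr_ae (hφmeas hs) ((hρ.ae_eq _ (key f hf)).mono fun y h _ => h)
    rw [h1]
    have hsm : AEStronglyMeasurable f (Measure.map φ ν) := by
      rw [hφ]; exact hf.1.aestronglyMeasurable
    have h2 := setIntegral_map hs hsm hφmeas.aemeasurable
    rw [hφ] at h2
    exact h2.symm
  · -- linear
    intro f g hf hg x y
    funext t
    have h1 : ((fun s => x * f s + y * g s) ∘ φ) = fun u => x * (f ∘ φ) u + y * (g ∘ φ) u := rfl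
    rw [h1, hρ.linear _ _ (key f hf) (key g hg) x y]
    rw [integral_add ((int _ (hρ.mem _ (key f hf)) t).const_mul x)
      ((int _ (hρ.mem _ (key g hg)) t).const_mul y), integral_const_mul, integral_const_mul]
  · -- map_one
    funext x
    haveI := hprob x
    show (∫ y, ρ ((fun _ : I01 => (1:ℝ)) ∘ φ) y ∂(νx x)) = 1
    have h1 : ((fun _ : I01 => (1:ℝ)) ∘ φ) = fun _ : Y => (1:ℝ) := rfl
    rw [h1, hρ.map_one, integral_const]
    simp
  · -- nonneg
    intro f hf h0 x
    have hcomp : ∀ᵐ y ∂ν, 0 ≤ (f ∘ φ) y :=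
      ae_of_ae_map hφmeas.aemeasurable (by rwa [hφ])
    exact integral_nonneg fun y => hρ.nonneg _ (key f hf) hcomp y
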